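/- arXiv:2103.08939 — 3 statements merged into one kernel-verified Lean document; each statement's English description precedes it below -/
import Mathlib

section
/- If H is cocommutative, then the twisted action of an H-equivariant Lie algebra g on an equivariant g-module M is a braided representation of the twisted bracket: ξ₁ ⋅⋆ (ξ₂ ⋅⋆ m) − Σ (Rₖ • ξ₂) ⋅⋆ ((Rᵏ • ξ₁) ⋅⋆ m) = [ξ₁, ξ₂]⋆ ⋅⋆ m for all ξ₁, ξ₂ ∈ g and m ∈ M, where R⁻¹ = Σ Rₖ ⊗ Rᵏ is the inverse of the R-matrix. -/
open TensorProduct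

noncomputable section

/-- The generic "twisted bilinear map": given `H`-actions on `A` and `B`, a bilinear map
`mu : A →ₗ B →ₗ C` and an element `T = Σ T₁ ⊗ T₂` of `H ⊗ H`, this is the bilinear map
`(a, b) ↦ Σ mu (T₁ • a) (T₂ • b)`. -/
def twistBil {k H A B C : Type*} [CommRing k] [Ring H] [Algebra k H]
    [AddCommGroup A] [Module k A] [AddCommGroup B] [Module k B]
    [AddCommGroup C] [Module k C]
    (actA : H →ₗ[k] A →ₗ[k] A) (actB : H →ₗ[k] B →ₗ[k] B)
    (mu : A →ₗ[k] B →ₗ[k] C) (T : H ⊗[k] H) : A →ₗ[k] B →ₗ[k] C :=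
  TensorProduct.curry (TensorProduct.lift mu ∘ₗ
    (TensorProduct.homTensorHomMap (RingHom.id k) A B A B ∘ₗ TensorProduct.map actA actB) T)

/-- A Drinfel'd twist on a Hopf algebra `H`: an invertible element `F` of `H ⊗ H`
(with specified inverse `Finv`) satisfying the 2-cocycle condition
`(F ⊗ 1)·((Δ ⊗ id)(F)) = (1 ⊗ F)·((id ⊗ Δ)(F))` and the normalization condition
`(ε ⊗ id)(F) = 1 = (id ⊗ ε)(F)`. -/
def IsDrinfeldTwist {k H : Type*} [CommRing k] [Ring H] [HopfAlgebra k H]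
    (F Finv : H ⊗[k] H) : Prop :=
  F * Finv = 1 ∧ Finv * F = 1 ∧
  TensorProduct.map LinearMap.id ((TensorProduct.mk k H H).flip 1) F *
      TensorProduct.assoc k H H H ((Coalgebra.comul (R := k) (A := H)).rTensor H F) =
    ((1 : H) ⊗ₜ[k] F) * (Coalgebra.comul (R := k) (A := H)).lTensor H F ∧
  TensorProduct.lid k H ((Coalgebra.counit (R := k) (A := H)).rTensor H F) = 1 ∧
  TensorProduct.rid k H ((Coalgebra.counit (R := k) (A := H)).lTensor H F) = 1

/-- The twisted comultiplication `Δ_F(x) := F · Δ(x) · F⁻¹`, as a `k`-linear map. -/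
def comulF {k H : Type*} [CommRing k] [Ring H] [HopfAlgebra k H]
    (F Finv : H ⊗[k] H) : H →ₗ[k] H ⊗[k] H :=
  LinearMap.mulRight k Finv ∘ₗ LinearMap.mulLeft k F ∘ₗ Coalgebra.comul (R := k)

/-- The `R`-matrix `R := τ(F) · F⁻¹` of a Drinfel'd twist. -/
def Rmat {k H : Type*} [CommRing k] [Ring H] [Algebra k H]
    (F Finv : H ⊗[k] H) : H ⊗[k] H :=
  TensorProduct.comm k H H F * Finv

/-- The inverse `R⁻¹ = F · τ(F⁻¹)` of the `R`-matrix of a Drinfel'd twist; written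
`R⁻¹ = Σ Rₖ ⊗ Rᵏ`. -/
def RmatInv {k H : Type*} [CommRing k] [Ring H] [Algebra k H]
    (F Finv : H ⊗[k] H) : H ⊗[k] H :=
  F * TensorProduct.comm k H H Finv

/-- `H` is cocommutative if `τ ∘ Δ = Δ`. -/
def IsCocommutative (k H : Type*) [CommRing k] [Ring H] [HopfAlgebra k H] : Prop :=
  ∀ x : H, TensorProduct.comm k H H (Coalgebra.comul (R := k) x) = Coalgebra.comul (R := k) x

/-- For `T = Σ T₁ ⊗ T₂ ∈ H ⊗ H`, the element `T₁₂ = Σ T₁ ⊗ T₂ ⊗ 1` of `H ⊗ H ⊗ H`. -/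
def leg12 {k H : Type*} [CommRing k] [Ring H] [Algebra k H]
    (T : H ⊗[k] H) : H ⊗[k] (H ⊗[k] H) :=
  TensorProduct.map LinearMap.id ((TensorProduct.mk k H H).flip 1) T

/-- For `T = Σ T₁ ⊗ T₂ ∈ H ⊗ H`, the element `T₁₃ = Σ T₁ ⊗ 1 ⊗ T₂` of `H ⊗ H ⊗ H`. -/
def leg13 {k H : Type*} [CommRing k] [Ring H] [Algebra k H]
    (T : H ⊗[k] H) : H ⊗[k] (H ⊗[k] H) :=
  TensorProduct.map LinearMap.id (TensorProduct.mk k H H 1) T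

/-- For `T ∈ H ⊗ H`, the element `T₂₃ = 1 ⊗ T` of `H ⊗ H ⊗ H`. -/
def leg23 {k H : Type*} [CommRing k] [Ring H] [Algebra k H]
    (T : H ⊗[k] H) : H ⊗[k] (H ⊗[k] H) :=
  (1 : H) ⊗ₜ[k] T

/-- A (k-bilinear) left `H`-action: `(gh) • a = g • (h • a)` and `1 • a = a`. -/
def IsHAction {k H A : Type*} [CommRing k] [Ring H] [Algebra k H]
    [AddCommGroup A] [Module k A] (act : H →ₗ[k] A →ₗ[k] A) : Prop :=
  (∀ (g h : H) (a : A), act (g * h) a = act g (act h a)) ∧ ∀ a : A, act 1 a = a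

/-- An `H`-module algebra structure on `A`: a left `H`-action such that
`h • (a·b) = Σ (h⁽¹⁾ • a)·(h⁽²⁾ • b)` and `h • 1 = ε(h)·1`. -/
def IsModuleAlgebra {k H A : Type*} [CommRing k] [Ring H] [HopfAlgebra k H]
    [Ring A] [Algebra k A] (act : H →ₗ[k] A →ₗ[k] A) : Prop :=
  IsHAction act ∧
  (∀ (h : H) (a b : A),
    act h (a * b) = twistBil act act (LinearMap.mul k A) (Coalgebra.comul (R := k) h) a b) ∧
  ∀ h : H, act h 1 = Coalgebra.counit (R := k) h • (1 : A)

/-- The star product `a ⋆ b := Σ (f̄ᵏ • a)·(f̄ₖ • b)` on an `H`-module algebra,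
as a bilinear map; here `Finv = Σ f̄ᵏ ⊗ f̄ₖ` is the inverse of the twist. -/
def starBil {k H A : Type*} [CommRing k] [Ring H] [Algebra k H]
    [Ring A] [Algebra k A] (act : H →ₗ[k] A →ₗ[k] A) (Finv : H ⊗[k] H) :
    A →ₗ[k] A →ₗ[k] A :=
  twistBil act act (LinearMap.mul k A) Finv

/-- The Lie bracket of a Lie algebra `g` over `k`, as a bilinear map. -/
def lieBil (k g : Type*) [CommRing k] [LieRing g] [LieAlgebra k g] : g →ₗ[k] g →ₗ[k] g :=
  LinearMap.mk₂ k (fun x y => ⁅x, y⁆) add_lie smul_lie lie_add lie_smul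

/-- An `H`-equivariant Lie algebra structure: a left `H`-action on the Lie algebra `g`
such that `h • ⁅a, b⁆ = Σ ⁅h⁽¹⁾ • a, h⁽²⁾ • b⁆`. -/
def IsEquivLieAlgebra {k H g : Type*} [CommRing k] [Ring H] [HopfAlgebra k H]
    [LieRing g] [LieAlgebra k g] (act : H →ₗ[k] g →ₗ[k] g) : Prop :=
  IsHAction act ∧
  ∀ (h : H) (a b : g),
    act h ⁅a, b⁆ = twistBil act act (lieBil k g) (Coalgebra.comul (R := k) h) a b

/-- The twisted bracket `[a, b]⋆ := Σ ⁅f̄ᵏ • a, f̄ₖ • b⁆` on an `H`-equivariant Lie algebra. -/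
def lieStar {k H g : Type*} [CommRing k] [Ring H] [Algebra k H]
    [LieRing g] [LieAlgebra k g] (act : H →ₗ[k] g →ₗ[k] g) (Finv : H ⊗[k] H) :
    g →ₗ[k] g →ₗ[k] g :=
  twistBil act act (lieBil k g) Finv

/-- The twisted antipode `S_F(x) := u · S(x) · u⁻¹` with `u := Σ fᵏ·S(fₖ)` and
`u⁻¹ = Σ S(f̄ᵏ)·f̄ₖ`. -/
def antipodeF {k H : Type*} [CommRing k] [Ring H] [HopfAlgebra k H]
    (F Finv : H ⊗[k] H) : H →ₗ[k] H :=
  LinearMap.mulRight k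
      (LinearMap.mul' k H ((HopfAlgebra.antipode (R := k)).rTensor H Finv)) ∘ₗ
    LinearMap.mulLeft k
      (LinearMap.mul' k H ((HopfAlgebra.antipode (R := k)).lTensor H F)) ∘ₗ
    HopfAlgebra.antipode (R := k)

end

noncomputable section BraidedAux

@[simp] lemma twistBil_tmul {k H A B C : Type*} [CommRing k] [Ring H] [Algebra k H]
    [AddCommGroup A] [Module k A] [AddCommGroup B] [Module k B]
    [AddCommGroup C] [Module k C]
    (actA : H →ₗ[k] A →ₗ[k] A) (actB : H →ₗ[k] B →ₗ[k] B)
    (mu : A →ₗ[k] B →ₗ[k] C) (s t : H) (a : A) (b : B) :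
    twistBil actA actB mu (s ⊗ₜ t) a b = mu (actA s a) (actB t b) := by
  simp [twistBil]

@[simp] lemma twistBil_add {k H A B C : Type*} [CommRing k] [Ring H] [Algebra k H]
    [AddCommGroup A] [Module k A] [AddCommGroup B] [Module k B]
    [AddCommGroup C] [Module k C]
    (actA : H →ₗ[k] A →ₗ[k] A) (actB : H →ₗ[k] B →ₗ[k] B)
    (mu : A →ₗ[k] B →ₗ[k] C) (T T' : H ⊗[k] H) (a : A) (b : B) :
    twistBil actA actB mu (T + T') a b
      = twistBil actA actB mu T a b + twistBil actA actB mu T' a b := by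
  simp [twistBil, map_add]

@[simp] lemma twistBil_zero {k H A B C : Type*} [CommRing k] [Ring H] [Algebra k H]
    [AddCommGroup A] [Module k A] [AddCommGroup B] [Module k B]
    [AddCommGroup C] [Module k C]
    (actA : H →ₗ[k] A →ₗ[k] A) (actB : H →ₗ[k] B →ₗ[k] B)
    (mu : A →ₗ[k] B →ₗ[k] C) (a : A) (b : B) :
    twistBil actA actB mu (0 : H ⊗[k] H) a b = 0 := by
  simp [twistBil, map_zero]

variable {k H g M : Type*} [CommRing k] [Ring H] [HopfAlgebra k H]
    [LieRing g] [LieAlgebra k g] [AddCommGroup M] [Module k M]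

/-- `tri ξa ξb m (a ⊗ (b ⊗ c)) = ρ (a • ξa) (ρ (b • ξb) (c • m))`. -/
def tri (actg : H →ₗ[k] g →ₗ[k] g) (actM : H →ₗ[k] M →ₗ[k] M)
    (ρ : g →ₗ[k] M →ₗ[k] M) (ξa ξb : g) (m : M) : H ⊗[k] (H ⊗[k] H) →ₗ[k] M :=
  TensorProduct.lift ((ρ.comp (actg.flip ξa)).compl₂
    (TensorProduct.lift ((ρ.comp (actg.flip ξb)).compl₂ (actM.flip m))))

@[simp] lemma tri_tmul (actg : H →ₗ[k] g →ₗ[k] g) (actM : H →ₗ[k] M →ₗ[k] M)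
    (ρ : g →ₗ[k] M →ₗ[k] M) (ξa ξb : g) (m : M) (a b c : H) :
    tri actg actM ρ ξa ξb m (a ⊗ₜ (b ⊗ₜ c))
      = ρ (actg a ξa) (ρ (actg b ξb) (actM c m)) := by
  simp [tri]

/-- The flip of the first two legs of `H ⊗ (H ⊗ H)`. -/
def tau12 : H ⊗[k] (H ⊗[k] H) →ₗ[k] H ⊗[k] (H ⊗[k] H) :=
  (TensorProduct.assoc k H H H).toLinearMap ∘ₗ
    (LinearMap.rTensor H (TensorProduct.comm k H H).toLinearMap) ∘ₗ
    (TensorProduct.assoc k H H H).symm.toLinearMap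

@[simp] lemma tau12_tmul (a b c : H) :
    tau12 (k := k) (a ⊗ₜ (b ⊗ₜ c)) = b ⊗ₜ (a ⊗ₜ c) := by
  simp [tau12]

/-- `aD S = assoc ((Δ ⊗ id) S)`. -/
def aD : H ⊗[k] H →ₗ[k] H ⊗[k] (H ⊗[k] H) :=
  (TensorProduct.assoc k H H H).toLinearMap ∘ₗ
    (Coalgebra.comul (R := k) (A := H)).rTensor H

lemma aD_tmul (s t : H) :
    aD (k := k) (s ⊗ₜ t)
      = TensorProduct.assoc k H H H ((Coalgebra.comul (R := k) s) ⊗ₜ t) := by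
  simp [aD, LinearMap.rTensor_tmul]

/-- `lD S = (id ⊗ Δ) S`. -/
def lD : H ⊗[k] H →ₗ[k] H ⊗[k] (H ⊗[k] H) :=
  (Coalgebra.comul (R := k) (A := H)).lTensor H

lemma lD_tmul (s t : H) :
    lD (k := k) (s ⊗ₜ t) = s ⊗ₜ (Coalgebra.comul (R := k) t) := by
  simp [lD]

lemma lD_mul (S T : H ⊗[k] H) : lD (k := k) (S * T) = lD S * lD T := by
  induction S using TensorProduct.induction_on with
  | zero => simp
  | add u v hu hv => simp [add_mul, hu, hv]
  | tmul s₁ s₂ =>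
    induction T using TensorProduct.induction_on with
    | zero => simp
    | add u v hu hv => simp [mul_add, hu, hv]
    | tmul t₁ t₂ =>
      simp [Algebra.TensorProduct.tmul_mul_tmul, lD_tmul]

lemma assoc_mul_tmul (c c' : H ⊗[k] H) (s t : H) :
    TensorProduct.assoc k H H H ((c * c') ⊗ₜ (s * t))
      = TensorProduct.assoc k H H H (c ⊗ₜ s) * TensorProduct.assoc k H H H (c' ⊗ₜ t) := by
  induction c using TensorProduct.induction_on with
  | zero => simp only [zero_mul, TensorProduct.zero_tmul, LinearEquiv.map_zero]
  | add u v hu hv =>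
    simp only [add_mul, TensorProduct.add_tmul, LinearEquiv.map_add, hu, hv]
  | tmul a b =>
    induction c' using TensorProduct.induction_on with
    | zero => simp only [mul_zero, TensorProduct.zero_tmul, LinearEquiv.map_zero]
    | add u v hu hv =>
      simp only [mul_add, TensorProduct.add_tmul, LinearEquiv.map_add, hu, hv]
    | tmul a' b' =>
      simp [Algebra.TensorProduct.tmul_mul_tmul]

lemma aD_mul (S T : H ⊗[k] H) : aD (k := k) (S * T) = aD S * aD T := by
  induction S using TensorProduct.induction_on with
  | zero => simp
  | add u v hu hv => simp [add_mul, hu, hv]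
  | tmul s₁ s₂ =>
    induction T using TensorProduct.induction_on with
    | zero => simp
    | add u v hu hv => simp [mul_add, hu, hv]
    | tmul t₁ t₂ =>
      rw [Algebra.TensorProduct.tmul_mul_tmul, aD_tmul, aD_tmul, aD_tmul,
        Bialgebra.comul_mul, assoc_mul_tmul]

lemma lD_one : lD (k := k) (1 : H ⊗[k] H) = 1 := by
  rw [Algebra.TensorProduct.one_def, lD_tmul, Bialgebra.comul_one]
  rfl

lemma aD_one : aD (k := k) (1 : H ⊗[k] H) = 1 := by
  rw [Algebra.TensorProduct.one_def, aD_tmul, Bialgebra.comul_one]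
  rw [show ((1 : H ⊗[k] H)) = (1:H) ⊗ₜ[k] (1:H) from rfl]
  simp
  rfl

lemma leg12_tmul (s t : H) :
    leg12 (k := k) (s ⊗ₜ t) = s ⊗ₜ (t ⊗ₜ (1 : H)) := by
  simp [leg12]

lemma leg12_mul (S T : H ⊗[k] H) :
    leg12 (k := k) (S * T) = leg12 S * leg12 T := by
  induction S using TensorProduct.induction_on with
  | zero => simp [leg12]
  | add u v hu hv => simp only [leg12, map_add] at hu hv ⊢; rw [add_mul, map_add, hu, hv, add_mul]
  | tmul s₁ s₂ =>
    induction T using TensorProduct.induction_on with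
    | zero => simp [leg12]
    | add u v hu hv => simp only [leg12, map_add] at hu hv ⊢; rw [mul_add, map_add, hu, hv, mul_add]
    | tmul t₁ t₂ =>
      rw [Algebra.TensorProduct.tmul_mul_tmul, leg12_tmul, leg12_tmul, leg12_tmul,
        Algebra.TensorProduct.tmul_mul_tmul, Algebra.TensorProduct.tmul_mul_tmul, mul_one]

lemma leg23'_mul (S T : H ⊗[k] H) :
    ((1 : H) ⊗ₜ[k] (S * T) : H ⊗[k] (H ⊗[k] H))
      = ((1 : H) ⊗ₜ[k] S) * ((1 : H) ⊗ₜ[k] T) := by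
  rw [Algebra.TensorProduct.tmul_mul_tmul, mul_one]

lemma tau12_mul (S T : H ⊗[k] (H ⊗[k] H)) :
    tau12 (k := k) (S * T) = tau12 S * tau12 T := by
  induction S using TensorProduct.induction_on with
  | zero => simp
  | add u v hu hv => simp [add_mul, hu, hv]
  | tmul s₁ s₂ =>
    induction T using TensorProduct.induction_on with
    | zero => simp
    | add u v hu hv => simp [mul_add, hu, hv]
    | tmul t₁ t₂ =>
      induction s₂ using TensorProduct.induction_on with
      | zero => simp
      | add u v hu hv =>
        simp only [TensorProduct.tmul_add, add_mul, map_add] at hu hv ⊢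
        rw [hu, hv]
      | tmul a b =>
        induction t₂ using TensorProduct.induction_on with
        | zero => simp
        | add u v hu hv =>
          simp only [TensorProduct.tmul_add, mul_add, map_add] at hu hv ⊢
          rw [hu, hv]
        | tmul a' b' =>
          simp [Algebra.TensorProduct.tmul_mul_tmul]

lemma tau12_assoc_tmul (c : H ⊗[k] H) (s : H) :
    tau12 (k := k) (TensorProduct.assoc k H H H (c ⊗ₜ s))
      = TensorProduct.assoc k H H H ((TensorProduct.comm k H H c) ⊗ₜ s) := by
  induction c using TensorProduct.induction_on with
  | zero => simp only [TensorProduct.zero_tmul, LinearEquiv.map_zero, LinearMap.map_zero]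
  | add u v hu hv =>
    simp only [TensorProduct.add_tmul, LinearEquiv.map_add, LinearMap.map_add, hu, hv]
  | tmul a b => simp

lemma tau12_aD (hcc : IsCocommutative k H) (S : H ⊗[k] H) :
    tau12 (k := k) (aD S) = aD S := by
  induction S using TensorProduct.induction_on with
  | zero => simp
  | add u v hu hv => simp [map_add, hu, hv]
  | tmul s t => rw [aD_tmul, tau12_assoc_tmul, hcc]

lemma tau12_leg12 (T : H ⊗[k] H) :
    tau12 (k := k) (leg12 T) = leg12 (TensorProduct.comm k H H T) := by
  induction T using TensorProduct.induction_on with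
  | zero => simp [leg12]
  | add u v hu hv =>
    simp only [leg12, map_add] at hu hv ⊢; rw [hu, hv]
  | tmul s t => rw [leg12_tmul]; simp [leg12_tmul]

lemma leg12_one : leg12 (k := k) (1 : H ⊗[k] H) = 1 := by
  rw [Algebra.TensorProduct.one_def, leg12_tmul]
  rfl

variable (actg : H →ₗ[k] g →ₗ[k] g) (actM : H →ₗ[k] M →ₗ[k] M) (ρ : g →ₗ[k] M →ₗ[k] M)

lemma nestP1 (hg : IsHAction actg) (hM : IsHAction actM)
    (hequiv : ∀ (h : H) (ξ : g) (m : M),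
      actM h (ρ ξ m) = twistBil actg actM ρ (Coalgebra.comul (R := k) h) ξ m)
    (ξa ξb : g) (m : M) (S T : H ⊗[k] H) :
    twistBil actg actM ρ S ξa (twistBil actg actM ρ T ξb m)
      = tri actg actM ρ ξa ξb m (lD S * ((1 : H) ⊗ₜ[k] T)) := by
  induction S using TensorProduct.induction_on with
  | zero => simp only [twistBil_zero, LinearMap.map_zero, zero_mul]
  | add u v hu hv =>
    simp only [twistBil_add, LinearMap.map_add, add_mul, hu, hv]
  | tmul s₁ s₂ =>
    rw [twistBil_tmul, lD_tmul]
    induction T using TensorProduct.induction_on with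
    | zero =>
      simp only [twistBil_zero, LinearMap.map_zero, TensorProduct.tmul_zero, mul_zero]
    | add u v hu hv =>
      simp only [twistBil_add, LinearMap.map_add, TensorProduct.tmul_add, mul_add, hu, hv]
    | tmul t₁ t₂ =>
      rw [twistBil_tmul, hequiv]
      generalize Coalgebra.comul (R := k) s₂ = c
      induction c using TensorProduct.induction_on with
      | zero =>
        simp only [twistBil_zero, LinearMap.map_zero, TensorProduct.zero_tmul,
          TensorProduct.tmul_zero, zero_mul]
      | add u v hu hv =>
        simp only [twistBil_add, LinearMap.map_add, TensorProduct.tmul_add, add_mul, hu, hv]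
      | tmul c₁ c₂ =>
        rw [twistBil_tmul, Algebra.TensorProduct.tmul_mul_tmul,
          Algebra.TensorProduct.tmul_mul_tmul, tri_tmul, mul_one,
          hg.1, hM.1]

lemma tri_shift (hg : IsHAction actg) (ξa ξb : g) (m : M) (r r' : H)
    (u : H ⊗[k] (H ⊗[k] H)) :
    tri actg actM ρ (actg r ξa) (actg r' ξb) m u
      = tri actg actM ρ ξa ξb m (u * (r ⊗ₜ (r' ⊗ₜ (1 : H)))) := by
  induction u using TensorProduct.induction_on with
  | zero => simp only [LinearMap.map_zero, zero_mul]
  | add x y hx hy => simp only [LinearMap.map_add, add_mul, hx, hy]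
  | tmul a x =>
    induction x using TensorProduct.induction_on with
    | zero => simp only [TensorProduct.tmul_zero, LinearMap.map_zero, zero_mul]
    | add x y hx hy =>
      simp only [TensorProduct.tmul_add, LinearMap.map_add, add_mul, hx, hy]
    | tmul b c =>
      rw [tri_tmul, Algebra.TensorProduct.tmul_mul_tmul,
        Algebra.TensorProduct.tmul_mul_tmul, tri_tmul, mul_one, hg.1, hg.1]

lemma midP3 (hg : IsHAction actg) (hM : IsHAction actM)
    (hequiv : ∀ (h : H) (ξ : g) (m : M),
      actM h (ρ ξ m) = twistBil actg actM ρ (Coalgebra.comul (R := k) h) ξ m)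
    (ξ₁ ξ₂ : g) (m : M) (Finv : H ⊗[k] H) (W : H ⊗[k] H) :
    twistBil actg actg
        ((twistBil actg actM ρ Finv).compl₂ ((twistBil actg actM ρ Finv).flip m)) W ξ₂ ξ₁
      = tri actg actM ρ ξ₂ ξ₁ m ((lD Finv * ((1 : H) ⊗ₜ[k] Finv)) * leg12 W) := by
  induction W using TensorProduct.induction_on with
  | zero => simp only [twistBil_zero, leg12, LinearMap.map_zero, mul_zero]
  | add u v hu hv =>
    simp only [twistBil_add, leg12, LinearMap.map_add, mul_add, hu, hv]
  | tmul r r' =>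
    rw [twistBil_tmul, LinearMap.compl₂_apply, LinearMap.flip_apply,
      nestP1 actg actM ρ hg hM hequiv, tri_shift actg actM ρ hg, leg12_tmul]

lemma brP2 (hg : IsEquivLieAlgebra actg) (hM : IsHAction actM)
    (hlie : ∀ (ξ₁ ξ₂ : g) (m : M), ρ ⁅ξ₁, ξ₂⁆ m = ρ ξ₁ (ρ ξ₂ m) - ρ ξ₂ (ρ ξ₁ m))
    (ξ₁ ξ₂ : g) (m : M) (S T : H ⊗[k] H) :
    twistBil actg actM ρ S (lieStar actg T ξ₁ ξ₂) m
      = tri actg actM ρ ξ₁ ξ₂ m (aD S * leg12 T)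
        - tri actg actM ρ ξ₂ ξ₁ m (tau12 (aD S * leg12 T)) := by
  induction S using TensorProduct.induction_on with
  | zero => simp only [twistBil_zero, LinearMap.map_zero, zero_mul, sub_zero]
  | add u v hu hv =>
    simp only [twistBil_add, LinearMap.map_add, add_mul, hu, hv]
    abel
  | tmul s₁ s₂ =>
    rw [twistBil_tmul, aD_tmul]
    induction T using TensorProduct.induction_on with
    | zero =>
      simp only [lieStar, twistBil_zero, leg12, LinearMap.map_zero,
        LinearMap.zero_apply, mul_zero, sub_zero]
    | add u v hu hv =>
      simp only [lieStar, leg12] at hu hv ⊢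
      simp only [twistBil_add, LinearMap.map_add, LinearMap.add_apply, mul_add]
      rw [hu, hv]
      abel
    | tmul t₁ t₂ =>
      have hls : lieStar actg (t₁ ⊗ₜ[k] t₂) ξ₁ ξ₂ = ⁅actg t₁ ξ₁, actg t₂ ξ₂⁆ := by
        simp [lieStar, lieBil]
      rw [hls, hg.2, leg12_tmul]
      generalize Coalgebra.comul (R := k) s₁ = c
      induction c using TensorProduct.induction_on with
      | zero =>
        simp only [twistBil_zero, LinearMap.map_zero, LinearMap.zero_apply,
          TensorProduct.zero_tmul, LinearEquiv.map_zero, zero_mul, sub_zero]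
      | add u v hu hv =>
        simp only [twistBil_add, LinearMap.map_add, LinearMap.add_apply,
          TensorProduct.add_tmul, LinearEquiv.map_add, add_mul]
        rw [hu, hv]
        abel
      | tmul c₁ c₂ =>
        rw [twistBil_tmul]
        have hassoc : TensorProduct.assoc k H H H ((c₁ ⊗ₜ[k] c₂) ⊗ₜ[k] s₂)
            = c₁ ⊗ₜ[k] (c₂ ⊗ₜ[k] s₂) := rfl
        rw [hassoc, Algebra.TensorProduct.tmul_mul_tmul,
          Algebra.TensorProduct.tmul_mul_tmul, mul_one]
        rw [show (lieBil k g) (actg c₁ (actg t₁ ξ₁)) (actg c₂ (actg t₂ ξ₂))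
            = ⁅actg c₁ (actg t₁ ξ₁), actg c₂ (actg t₂ ξ₂)⁆ from rfl]
        rw [hlie, tau12_tmul, tri_tmul, tri_tmul, hg.1.1, hg.1.1]

end BraidedAux

/-- If `H` is cocommutative, then the twisted action of an `H`-equivariant Lie
algebra `g` on an equivariant `g`-module `M` is a braided representation of the twisted
bracket: `ξ₁ ⋅⋆ (ξ₂ ⋅⋆ m) − Σ (Rₖ • ξ₂) ⋅⋆ ((Rᵏ • ξ₁) ⋅⋆ m) = [ξ₁, ξ₂]⋆ ⋅⋆ m`. -/
theorem twisted_action_braided_rep {k H g M : Type*} [CommRing k] [Ring H] [HopfAlgebra k H]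
    [LieRing g] [LieAlgebra k g] [AddCommGroup M] [Module k M]
    (actg : H →ₗ[k] g →ₗ[k] g) (hg : IsEquivLieAlgebra actg)
    (actM : H →ₗ[k] M →ₗ[k] M) (hM : IsHAction actM)
    (ρ : g →ₗ[k] M →ₗ[k] M)
    (hlie : ∀ (ξ₁ ξ₂ : g) (m : M), ρ ⁅ξ₁, ξ₂⁆ m = ρ ξ₁ (ρ ξ₂ m) - ρ ξ₂ (ρ ξ₁ m))
    (hequiv : ∀ (h : H) (ξ : g) (m : M),
      actM h (ρ ξ m) = twistBil actg actM ρ (Coalgebra.comul (R := k) h) ξ m)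
    (F Finv : H ⊗[k] H) (hF : IsDrinfeldTwist F Finv) (hcc : IsCocommutative k H) :
    ∀ (ξ₁ ξ₂ : g) (m : M),
      twistBil actg actM ρ Finv ξ₁ (twistBil actg actM ρ Finv ξ₂ m)
        - twistBil actg actg
            ((twistBil actg actM ρ Finv).compl₂ ((twistBil actg actM ρ Finv).flip m))
            (RmatInv F Finv) ξ₂ ξ₁
        = twistBil actg actM ρ Finv (lieStar actg Finv ξ₁ ξ₂) m := by
  intro ξ₁ ξ₂ m
  have hco : leg12 (k := k) F * aD (k := k) F = ((1 : H) ⊗ₜ[k] F) * lD (k := k) F :=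
    hF.2.2.1
  have hone : ((1 : H) ⊗ₜ[k] (1 : H ⊗[k] H)) = (1 : H ⊗[k] (H ⊗[k] H)) := rfl
  have h1 : (lD (k := k) Finv * ((1 : H) ⊗ₜ[k] Finv))
      * (((1 : H) ⊗ₜ[k] F) * lD (k := k) F) = 1 := by
    calc (lD (k := k) Finv * ((1 : H) ⊗ₜ[k] Finv)) * (((1 : H) ⊗ₜ[k] F) * lD (k := k) F)
        = lD (k := k) Finv * ((((1 : H) ⊗ₜ[k] Finv) * ((1 : H) ⊗ₜ[k] F)) * lD (k := k) F) := by
          rw [mul_assoc, mul_assoc]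
      _ = lD (k := k) Finv * (((1 : H) ⊗ₜ[k] (Finv * F)) * lD (k := k) F) := by
          rw [leg23'_mul]
      _ = lD (k := k) Finv * lD (k := k) F := by rw [hF.2.1, hone, one_mul]
      _ = lD (k := k) (Finv * F) := (lD_mul _ _).symm
      _ = 1 := by rw [hF.2.1, lD_one]
  have h2 : (leg12 (k := k) F * aD (k := k) F)
      * (aD (k := k) Finv * leg12 (k := k) Finv) = 1 := by
    calc (leg12 (k := k) F * aD (k := k) F) * (aD (k := k) Finv * leg12 (k := k) Finv)
        = leg12 (k := k) F * ((aD (k := k) F * aD (k := k) Finv) * leg12 (k := k) Finv) := by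
          rw [mul_assoc, mul_assoc]
      _ = leg12 (k := k) F * (aD (k := k) (F * Finv) * leg12 (k := k) Finv) := by
          rw [aD_mul]
      _ = leg12 (k := k) F * leg12 (k := k) Finv := by rw [hF.1, aD_one, one_mul]
      _ = leg12 (k := k) (F * Finv) := (leg12_mul _ _).symm
      _ = 1 := by rw [hF.1, leg12_one]
  have hXZ : lD (k := k) Finv * ((1 : H) ⊗ₜ[k] Finv)
      = aD (k := k) Finv * leg12 (k := k) Finv := by
    calc lD (k := k) Finv * ((1 : H) ⊗ₜ[k] Finv)
        = (lD (k := k) Finv * ((1 : H) ⊗ₜ[k] Finv)) * 1 := (mul_one _).symm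
      _ = (lD (k := k) Finv * ((1 : H) ⊗ₜ[k] Finv))
            * ((leg12 (k := k) F * aD (k := k) F)
              * (aD (k := k) Finv * leg12 (k := k) Finv)) := by rw [h2]
      _ = ((lD (k := k) Finv * ((1 : H) ⊗ₜ[k] Finv))
            * (((1 : H) ⊗ₜ[k] F) * lD (k := k) F))
            * (aD (k := k) Finv * leg12 (k := k) Finv) := by rw [hco]; simp only [mul_assoc]
      _ = aD (k := k) Finv * leg12 (k := k) Finv := by rw [h1, one_mul]
  have hR : RmatInv F Finv = F * TensorProduct.comm k H H Finv := rfl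
  have hkey : (lD (k := k) Finv * ((1 : H) ⊗ₜ[k] Finv)) * leg12 (k := k) (RmatInv F Finv)
      = tau12 (k := k) (aD (k := k) Finv * leg12 (k := k) Finv) := by
    calc (lD (k := k) Finv * ((1 : H) ⊗ₜ[k] Finv)) * leg12 (k := k) (RmatInv F Finv)
        = (aD (k := k) Finv * leg12 (k := k) Finv)
            * leg12 (k := k) (F * TensorProduct.comm k H H Finv) := by rw [hXZ, hR]
      _ = aD (k := k) Finv
            * leg12 (k := k) (Finv * (F * TensorProduct.comm k H H Finv)) := by
          simp only [leg12_mul, mul_assoc]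
      _ = aD (k := k) Finv * leg12 (k := k) (TensorProduct.comm k H H Finv) := by
          rw [← mul_assoc Finv, hF.2.1, one_mul]
      _ = tau12 (k := k) (aD (k := k) Finv) * tau12 (k := k) (leg12 (k := k) Finv) := by
          rw [tau12_aD hcc, tau12_leg12]
      _ = tau12 (k := k) (aD (k := k) Finv * leg12 (k := k) Finv) := (tau12_mul _ _).symm
  rw [nestP1 actg actM ρ hg.1 hM hequiv ξ₁ ξ₂ m Finv Finv,
    midP3 actg actM ρ hg.1 hM hequiv ξ₁ ξ₂ m Finv (RmatInv F Finv),
    brP2 actg actM ρ hg hM hlie ξ₁ ξ₂ m Finv Finv,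
    hkey, hXZ]
end

section
/- If H is cocommutative and an H-equivariant Lie algebra g acts on an H-module algebra A by H-equivariant derivations, then the twisted action is a braided derivation of the star product: ξ ⋅⋆ (a ⋆ b) = (ξ ⋅⋆ a) ⋆ b + Σ (Rₖ • a) ⋆ ((Rᵏ • ξ) ⋅⋆ b) for all ξ ∈ g and a, b ∈ A, where R⁻¹ = Σ Rₖ ⊗ Rᵏ is the inverse of the R-matrix. -/
open TensorProduct

noncomputable section Aux

open TensorProduct LinearMap

variable {k H : Type*} [CommRing k] [Ring H] [HopfAlgebra k H]

section Generic

variable {M B C : Type*} [AddCommGroup M] [Module k M] [AddCommGroup B] [Module k B]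
  [AddCommGroup C] [Module k C]
  (actA : H →ₗ[k] M →ₗ[k] M) (actB : H →ₗ[k] B →ₗ[k] B) (mu : M →ₗ[k] B →ₗ[k] C)

theorem twistBil_apply (T : H ⊗[k] H) (x : M) (y : B) :
    twistBil actA actB mu T x y =
      TensorProduct.lift mu
        (TensorProduct.homTensorHomMap (RingHom.id k) M B M B (TensorProduct.map actA actB T) (x ⊗ₜ[k] y)) :=
  rfl

theorem twistBil_tmul_s16 (s t : H) (x : M) (y : B) :
    twistBil actA actB mu (s ⊗ₜ[k] t) x y = mu (actA s x) (actB t y) := by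
  simp [twistBil_apply]

theorem twistBil_zero_s16 (x : M) (y : B) : twistBil actA actB mu (0 : H ⊗[k] H) x y = 0 := by
  simp [twistBil_apply]

theorem twistBil_add_s16 (T T' : H ⊗[k] H) (x : M) (y : B) :
    twistBil actA actB mu (T + T') x y =
      twistBil actA actB mu T x y + twistBil actA actB mu T' x y := by
  simp [twistBil_apply]

theorem twistBil_act (h1 : ∀ (s t : H) (x : M), actA (s * t) x = actA s (actA t x))
    (h2 : ∀ (s t : H) (y : B), actB (s * t) y = actB s (actB t y))
    (U : H ⊗[k] H) (s s' : H) (x : M) (y : B) :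
    twistBil actA actB mu U (actA s x) (actB s' y) =
      twistBil actA actB mu (U * (s ⊗ₜ[k] s')) x y := by
  induction U using TensorProduct.induction_on with
  | zero => simp [twistBil_zero_s16]
  | tmul u u' =>
      rw [Algebra.TensorProduct.tmul_mul_tmul, twistBil_tmul_s16, twistBil_tmul_s16, h1, h2]
  | add T1 T2 ih1 ih2 => rw [twistBil_add_s16, ih1, ih2, add_mul, twistBil_add_s16]

end Generic

variable {g A : Type*} [LieRing g] [LieAlgebra k g] [Ring A] [Algebra k A]

variable (act : H →ₗ[k] A →ₗ[k] A) (actg : H →ₗ[k] g →ₗ[k] g) (ρ : g →ₗ[k] A →ₗ[k] A)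
  (ξ : g) (a b : A)

/-- `Phi1 (x ⊗ (y ⊗ z)) = (x • ξ) ⋅ (y • a) * (z • b)`. -/
def Phi1 : H ⊗[k] (H ⊗[k] H) →ₗ[k] A :=
  TensorProduct.lift
      (TensorProduct.uncurry (RingHom.id k) A A A ∘ₗ
        LinearMap.llcomp k A A (A →ₗ[k] A) (LinearMap.mul k A) ∘ₗ ρ) ∘ₗ
    TensorProduct.map (actg.flip ξ) (TensorProduct.map (act.flip a) (act.flip b))

theorem Phi1_tmul (x y z : H) :
    Phi1 act actg ρ ξ a b (x ⊗ₜ[k] (y ⊗ₜ[k] z)) = ρ (actg x ξ) (act y a) * act z b := by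
  simp [Phi1]

/-- `Phi2 (x ⊗ (y ⊗ z)) = (x • a) * (y • ξ) ⋅ (z • b)`. -/
def Phi2 : H ⊗[k] (H ⊗[k] H) →ₗ[k] A :=
  TensorProduct.lift
      (TensorProduct.uncurry (RingHom.id k) g A A ∘ₗ
        LinearMap.lcomp k (A →ₗ[k] A) ρ ∘ₗ LinearMap.llcomp k A A A ∘ₗ LinearMap.mul k A) ∘ₗ
    TensorProduct.map (act.flip a) (TensorProduct.map (actg.flip ξ) (act.flip b))

theorem Phi2_tmul (x y z : H) :
    Phi2 act actg ρ ξ a b (x ⊗ₜ[k] (y ⊗ₜ[k] z)) = act x a * ρ (actg y ξ) (act z b) := by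
  simp [Phi2]

/-- The permutation of the first two tensor legs, as an algebra automorphism. -/
def sw12 : H ⊗[k] (H ⊗[k] H) ≃ₐ[k] H ⊗[k] (H ⊗[k] H) :=
  (Algebra.TensorProduct.assoc k k k H H H).symm.trans
    ((Algebra.TensorProduct.congr (Algebra.TensorProduct.comm k H H) AlgEquiv.refl).trans
      (Algebra.TensorProduct.assoc k k k H H H))

theorem sw12_tmul (x y z : H) :
    sw12 (k := k) (H := H) (x ⊗ₜ[k] (y ⊗ₜ[k] z)) = y ⊗ₜ[k] (x ⊗ₜ[k] z) := by
  simp [sw12, Algebra.TensorProduct.congr_apply]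

theorem algAssoc_eq (w : (H ⊗[k] H) ⊗[k] H) :
    Algebra.TensorProduct.assoc k k k H H H w = TensorProduct.assoc k H H H w := rfl

theorem assoc_mul (u v : (H ⊗[k] H) ⊗[k] H) :
    TensorProduct.assoc k H H H (u * v) =
      TensorProduct.assoc k H H H u * TensorProduct.assoc k H H H v := by
  rw [← algAssoc_eq, ← algAssoc_eq, ← algAssoc_eq, map_mul]

theorem sw12_assoc (w : (H ⊗[k] H) ⊗[k] H) :
    sw12 (k := k) (H := H) (TensorProduct.assoc k H H H w) =
      TensorProduct.assoc k H H H
        ((TensorProduct.comm k H H).toLinearMap.rTensor H w) := by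
  have h : (sw12 (k := k) (H := H)).toLinearMap ∘ₗ
        (TensorProduct.assoc k H H H).toLinearMap =
      (TensorProduct.assoc k H H H).toLinearMap ∘ₗ
        (TensorProduct.comm k H H).toLinearMap.rTensor H :=
    TensorProduct.ext_threefold fun x y z => by
      simp [sw12_tmul, TensorProduct.assoc_tmul, TensorProduct.comm_tmul,
        LinearMap.rTensor_tmul]
  exact DFunLike.congr_fun h w

/-- `leg12` as an algebra homomorphism. -/
def leg12Hom : (H ⊗[k] H) →ₐ[k] H ⊗[k] (H ⊗[k] H) :=
  Algebra.TensorProduct.map (AlgHom.id k H) Algebra.TensorProduct.includeLeft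

theorem leg12_eq (T : H ⊗[k] H) : leg12 T = leg12Hom (k := k) (H := H) T := by
  have h : (TensorProduct.map (LinearMap.id (R := k) (M := H))
        ((TensorProduct.mk k H H).flip 1)) = (leg12Hom (k := k) (H := H)).toLinearMap :=
    TensorProduct.ext' fun x y => by
      simp [leg12Hom, TensorProduct.map_tmul, LinearMap.flip_apply, TensorProduct.mk_apply]
  exact DFunLike.congr_fun h T

theorem sw12_leg12 (T : H ⊗[k] H) :
    sw12 (k := k) (H := H) (leg12 T) = leg12 (TensorProduct.comm k H H T) := by
  have h : (sw12 (k := k) (H := H)).toLinearMap ∘ₗ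
        (TensorProduct.map (LinearMap.id (R := k) (M := H))
          ((TensorProduct.mk k H H).flip 1)) =
      (TensorProduct.map (LinearMap.id (R := k) (M := H))
          ((TensorProduct.mk k H H).flip 1)) ∘ₗ (TensorProduct.comm k H H).toLinearMap :=
    TensorProduct.ext' fun x y => by
      simp [sw12_tmul, TensorProduct.map_tmul, LinearMap.flip_apply, TensorProduct.mk_apply,
        TensorProduct.comm_tmul]
  exact DFunLike.congr_fun h T

theorem leg23_eq (T : H ⊗[k] H) :
    leg23 T = (Algebra.TensorProduct.includeRight : (H ⊗[k] H) →ₐ[k] H ⊗[k] (H ⊗[k] H)) T :=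
  rfl

/-- `(id ⊗ Δ)` as an algebra homomorphism. -/
def D2Hom : (H ⊗[k] H) →ₐ[k] H ⊗[k] (H ⊗[k] H) :=
  Algebra.TensorProduct.map (AlgHom.id k H) (Bialgebra.comulAlgHom k H)

theorem D2_eq (T : H ⊗[k] H) :
    (Coalgebra.comul (R := k) (A := H)).lTensor H T = D2Hom (k := k) (H := H) T := by
  have h : (Coalgebra.comul (R := k) (A := H)).lTensor H =
      (D2Hom (k := k) (H := H)).toLinearMap :=
    TensorProduct.ext' fun x y => by
      simp [D2Hom, LinearMap.lTensor_tmul, TensorProduct.map_tmul]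
  exact DFunLike.congr_fun h T

/-- `(Δ ⊗ id)` (re-associated) as an algebra homomorphism. -/
def D1Hom : (H ⊗[k] H) →ₐ[k] H ⊗[k] (H ⊗[k] H) :=
  (Algebra.TensorProduct.assoc k k k H H H).toAlgHom.comp
    (Algebra.TensorProduct.map (Bialgebra.comulAlgHom k H) (AlgHom.id k H))

theorem D1_eq (T : H ⊗[k] H) :
    TensorProduct.assoc k H H H ((Coalgebra.comul (R := k) (A := H)).rTensor H T) =
      D1Hom (k := k) (H := H) T := by
  have h : (TensorProduct.assoc k H H H).toLinearMap ∘ₗ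
        (Coalgebra.comul (R := k) (A := H)).rTensor H =
      (D1Hom (k := k) (H := H)).toLinearMap :=
    TensorProduct.ext' fun x y => by
      simp [D1Hom, LinearMap.rTensor_tmul, TensorProduct.map_tmul, ← algAssoc_eq]
      rfl
  exact DFunLike.congr_fun h T

section Twist

variable {F Finv : H ⊗[k] H}

theorem cocycle_inv (hF : IsDrinfeldTwist F Finv) :
    (Coalgebra.comul (R := k) (A := H)).lTensor H Finv * leg23 Finv =
      TensorProduct.assoc k H H H ((Coalgebra.comul (R := k) (A := H)).rTensor H Finv) *
        leg12 Finv := by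
  obtain ⟨hFF, hFF', hc, -, -⟩ := hF
  rw [D2_eq, leg23_eq, D1_eq, leg12_eq]
  set u := leg12Hom (k := k) (H := H) F with hu
  set u' := leg12Hom (k := k) (H := H) Finv with hu'
  set p := D1Hom (k := k) (H := H) F with hp
  set p' := D1Hom (k := k) (H := H) Finv with hp'
  set v := (Algebra.TensorProduct.includeRight : (H ⊗[k] H) →ₐ[k] H ⊗[k] (H ⊗[k] H)) F with hv
  set v' := (Algebra.TensorProduct.includeRight :
    (H ⊗[k] H) →ₐ[k] H ⊗[k] (H ⊗[k] H)) Finv with hv'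
  set q := D2Hom (k := k) (H := H) F with hq
  set q' := D2Hom (k := k) (H := H) Finv with hq'
  have hcoc : u * p = v * q := by
    have h1 : leg12 F = u := leg12_eq F
    have h2 : TensorProduct.assoc k H H H
        ((Coalgebra.comul (R := k) (A := H)).rTensor H F) = p := D1_eq F
    have h3 : leg23 (k := k) F = v := leg23_eq F
    have h4 : (Coalgebra.comul (R := k) (A := H)).lTensor H F = q := D2_eq F
    calc u * p = leg12 F * TensorProduct.assoc k H H H
          ((Coalgebra.comul (R := k) (A := H)).rTensor H F) := by rw [h1, h2]
      _ = leg23 (k := k) F * (Coalgebra.comul (R := k) (A := H)).lTensor H F := hc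
      _ = v * q := by rw [h3, h4]
  have huu' : u * u' = 1 := by rw [hu, hu', ← map_mul, hFF, map_one]
  have hpp' : p * p' = 1 := by rw [hp, hp', ← map_mul, hFF, map_one]
  have hvv' : v' * v = 1 := by rw [hv, hv', ← map_mul, hFF', map_one]
  have hqq' : q' * q = 1 := by rw [hq, hq', ← map_mul, hFF', map_one]
  have hright : (u * p) * (p' * u') = 1 := by
    rw [mul_assoc, ← mul_assoc p, hpp', one_mul, huu']
  have hv2 : (v * q) * (p' * u') = 1 := by rw [← hcoc]; exact hright
  have hleft : (q' * v') * (v * q) = 1 := by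
    rw [mul_assoc, ← mul_assoc v', hvv', one_mul, hqq']
  calc q' * v' = (q' * v') * ((v * q) * (p' * u')) := by rw [hv2, mul_one]
    _ = ((q' * v') * (v * q)) * (p' * u') := (mul_assoc _ _ _).symm
    _ = p' * u' := by rw [hleft, one_mul]

theorem sw12_X (hF : IsDrinfeldTwist F Finv) (hcc : IsCocommutative k H) :
    sw12 (k := k) (H := H)
        ((Coalgebra.comul (R := k) (A := H)).lTensor H Finv * leg23 Finv) =
      ((Coalgebra.comul (R := k) (A := H)).lTensor H Finv * leg23 Finv) *
        leg12 (RmatInv F Finv) := by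
  have hccL : (TensorProduct.comm k H H).toLinearMap ∘ₗ
      (Coalgebra.comul (R := k) (A := H)) = Coalgebra.comul (R := k) (A := H) :=
    LinearMap.ext hcc
  rw [cocycle_inv hF, map_mul, sw12_assoc, sw12_leg12, ← LinearMap.rTensor_comp_apply, hccL,
    RmatInv]
  rw [leg12_eq ((TensorProduct.comm k H H) Finv), leg12_eq Finv,
    leg12_eq (F * (TensorProduct.comm k H H) Finv), map_mul, mul_assoc,
    ← mul_assoc (leg12Hom (k := k) (H := H) Finv), ← map_mul, hF.2.1, map_one, one_mul]

end Twist

end Aux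

/-- If `H` is cocommutative and an `H`-equivariant Lie algebra `g` acts on an
`H`-module algebra `A` by `H`-equivariant derivations, then the twisted action is a braided
derivation of the star product:
`ξ ⋅⋆ (a ⋆ b) = (ξ ⋅⋆ a) ⋆ b + Σ (Rₖ • a) ⋆ ((Rᵏ • ξ) ⋅⋆ b)` with `R⁻¹ = Σ Rₖ ⊗ Rᵏ`. -/
theorem twisted_action_braided_derivation {k H g A : Type*} [CommRing k] [Ring H]
    [HopfAlgebra k H] [LieRing g] [LieAlgebra k g] [Ring A] [Algebra k A]
    (act : H →ₗ[k] A →ₗ[k] A) (hA : IsModuleAlgebra act)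
    (actg : H →ₗ[k] g →ₗ[k] g) (hg : IsEquivLieAlgebra actg)
    (ρ : g →ₗ[k] A →ₗ[k] A)
    (hder : ∀ (ξ : g) (a b : A), ρ ξ (a * b) = ρ ξ a * b + a * ρ ξ b)
    (hequiv : ∀ (h : H) (ξ : g) (a : A),
      act h (ρ ξ a) = twistBil actg act ρ (Coalgebra.comul (R := k) h) ξ a)
    (F Finv : H ⊗[k] H) (hF : IsDrinfeldTwist F Finv) (hcc : IsCocommutative k H) :
    ∀ (ξ : g) (a b : A),
      twistBil actg act ρ Finv ξ (starBil act Finv a b)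
        = starBil act Finv (twistBil actg act ρ Finv ξ a) b
          + twistBil act actg
              ((starBil act Finv).compl₂ ((twistBil actg act ρ Finv).flip b))
              (RmatInv F Finv) a ξ := by
  intro ξ a b
  obtain ⟨⟨hactA, -⟩, hmulA, -⟩ := hA
  obtain ⟨⟨hactg, -⟩, -⟩ := hg
  set m := LinearMap.mul k A with hm
  set P1 := Phi1 act actg ρ ξ a b with hP1
  set P2 := Phi2 act actg ρ ξ a b with hP2
  -- Lemma C: derivation expansion
  have C1 : ∀ (t : H) (V : H ⊗[k] H),
      ρ (actg t ξ) (twistBil act act m V a b) =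
        P1 (t ⊗ₜ[k] V) + P2 (sw12 (k := k) (H := H) (t ⊗ₜ[k] V)) := by
    intro t V
    induction V using TensorProduct.induction_on with
    | zero => simp [twistBil_zero_s16]
    | tmul v v' =>
        rw [twistBil_tmul_s16, hm, LinearMap.mul_apply', hder, hP1, hP2, sw12_tmul, Phi1_tmul,
          Phi2_tmul]
    | add V1 V2 ih1 ih2 =>
        simp only [twistBil_add_s16, map_add, tmul_add, ih1, ih2]
        abel
  -- Lemma D1
  have D1lem : ∀ (W : H ⊗[k] H) (t' : H),
      m (twistBil actg act ρ W ξ a) (act t' b) =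
        P1 (TensorProduct.assoc k H H H (W ⊗ₜ[k] t')) := by
    intro W t'
    induction W using TensorProduct.induction_on with
    | zero => simp [twistBil_zero_s16]
    | tmul w w' =>
        rw [twistBil_tmul_s16, TensorProduct.assoc_tmul, hP1, Phi1_tmul, hm, LinearMap.mul_apply']
    | add W1 W2 ih1 ih2 =>
        simp only [twistBil_add_s16, map_add, LinearMap.add_apply, add_tmul, ih1, ih2]
  -- Lemma D2
  have D2lem : ∀ (u : H) (W : H ⊗[k] H),
      m (act u a) (twistBil actg act ρ W ξ b) = P2 (u ⊗ₜ[k] W) := by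
    intro u W
    induction W using TensorProduct.induction_on with
    | zero => simp [twistBil_zero_s16]
    | tmul w w' => rw [twistBil_tmul_s16, hP2, Phi2_tmul, hm, LinearMap.mul_apply']
    | add W1 W2 ih1 ih2 =>
        simp only [twistBil_add_s16, map_add, tmul_add, ih1, ih2]
  -- LHS expansion
  have LHSlem : ∀ (T S : H ⊗[k] H),
      twistBil actg act ρ T ξ (twistBil act act m S a b) =
        P1 ((Coalgebra.comul (R := k) (A := H)).lTensor H T * leg23 S) +
          P2 (sw12 (k := k) (H := H)
            ((Coalgebra.comul (R := k) (A := H)).lTensor H T * leg23 S)) := by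
    intro T S
    induction T using TensorProduct.induction_on with
    | zero => simp [twistBil_zero_s16]
    | tmul t t' =>
        rw [twistBil_tmul_s16]
        induction S using TensorProduct.induction_on with
        | zero => simp [twistBil_zero_s16, leg23, tmul_zero]
        | tmul s s' =>
            rw [twistBil_tmul_s16, hm, LinearMap.mul_apply', hmulA,
              twistBil_act act act m hactA hactA _ s s' a b, C1 t]
            have helt : (Coalgebra.comul (R := k) (A := H)).lTensor H (t ⊗ₜ[k] t') *
                leg23 (s ⊗ₜ[k] s') =
                t ⊗ₜ[k] (Coalgebra.comul (R := k) (A := H) t' * (s ⊗ₜ[k] s')) := by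
              rw [LinearMap.lTensor_tmul, leg23, Algebra.TensorProduct.tmul_mul_tmul, mul_one]
            rw [helt]
        | add S1 S2 ih1 ih2 =>
            have hleg : leg23 (k := k) (S1 + S2) = leg23 S1 + leg23 S2 := by
              simp [leg23, tmul_add]
            simp only [twistBil_add_s16, map_add, hleg, mul_add, ih1, ih2]
            abel
    | add T1 T2 ih1 ih2 =>
        simp only [twistBil_add_s16, map_add, add_mul, ih1, ih2]
        abel
  -- RHS first-term expansion
  have RHS1lem : ∀ (T S : H ⊗[k] H),
      twistBil act act m T (twistBil actg act ρ S ξ a) b =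
        P1 (TensorProduct.assoc k H H H
            ((Coalgebra.comul (R := k) (A := H)).rTensor H T) * leg12 S) := by
    intro T S
    induction T using TensorProduct.induction_on with
    | zero => simp [twistBil_zero_s16]
    | tmul t t' =>
        rw [twistBil_tmul_s16]
        induction S using TensorProduct.induction_on with
        | zero => simp [twistBil_zero_s16, leg12]
        | tmul s s' =>
            rw [twistBil_tmul_s16, hequiv, twistBil_act actg act ρ hactg hactA _ s s' ξ a, D1lem]
            have helt : TensorProduct.assoc k H H H
                ((Coalgebra.comul (R := k) (A := H)).rTensor H (t ⊗ₜ[k] t')) *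
                  leg12 (s ⊗ₜ[k] s') =
                TensorProduct.assoc k H H H
                  ((Coalgebra.comul (R := k) (A := H) t * (s ⊗ₜ[k] s')) ⊗ₜ[k] t') := by
              have h12 : leg12 (k := k) (s ⊗ₜ[k] s') =
                  TensorProduct.assoc k H H H ((s ⊗ₜ[k] s') ⊗ₜ[k] (1 : H)) := by
                simp [leg12, TensorProduct.assoc_tmul]
              rw [LinearMap.rTensor_tmul, h12, ← assoc_mul,
                Algebra.TensorProduct.tmul_mul_tmul, mul_one]
            rw [helt]
        | add S1 S2 ih1 ih2 =>
            have hleg : leg12 (k := k) (S1 + S2) = leg12 S1 + leg12 S2 := map_add _ _ _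
            simp only [twistBil_add_s16, map_add, LinearMap.add_apply, hleg, mul_add, ih1, ih2]
    | add T1 T2 ih1 ih2 =>
        simp only [twistBil_add_s16, map_add, LinearMap.add_apply, add_mul, ih1, ih2]
  -- RHS second-term expansion
  have RHS2lem : ∀ (T S : H ⊗[k] H) (r r' : H),
      twistBil act act m T (act r a) (twistBil actg act ρ S (actg r' ξ) b) =
        P2 (((Coalgebra.comul (R := k) (A := H)).lTensor H T * leg23 S) *
          (r ⊗ₜ[k] (r' ⊗ₜ[k] (1 : H)))) := by
    intro T S r r'
    induction T using TensorProduct.induction_on with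
    | zero => simp [twistBil_zero_s16]
    | tmul t t' =>
        rw [twistBil_tmul_s16, ← hactA]
        induction S using TensorProduct.induction_on with
        | zero => simp [twistBil_zero_s16, leg23, tmul_zero]
        | tmul s s' =>
            rw [twistBil_tmul_s16, ← hactg, hequiv,
              twistBil_act actg act ρ hactg hactA _ (s * r') s' ξ b, D2lem]
            have helt : ((Coalgebra.comul (R := k) (A := H)).lTensor H (t ⊗ₜ[k] t') *
                leg23 (s ⊗ₜ[k] s')) * (r ⊗ₜ[k] (r' ⊗ₜ[k] (1 : H))) =
                (t * r) ⊗ₜ[k]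
                  (Coalgebra.comul (R := k) (A := H) t' * ((s * r') ⊗ₜ[k] s')) := by
              rw [LinearMap.lTensor_tmul, leg23, Algebra.TensorProduct.tmul_mul_tmul, mul_one,
                Algebra.TensorProduct.tmul_mul_tmul, mul_assoc,
                Algebra.TensorProduct.tmul_mul_tmul, mul_one]
            rw [helt]
        | add S1 S2 ih1 ih2 =>
            have hleg : leg23 (k := k) (S1 + S2) = leg23 S1 + leg23 S2 := by
              simp [leg23, tmul_add]
            simp only [twistBil_add_s16, map_add, hleg, mul_add, add_mul, ih1, ih2]
    | add T1 T2 ih1 ih2 =>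
        simp only [twistBil_add_s16, map_add, LinearMap.add_apply, add_mul, ih1, ih2]
  -- assemble
  have estar : ∀ (x y : A), starBil act Finv x y = twistBil act act m Finv x y :=
    fun _ _ => rfl
  have key : ∀ (R' : H ⊗[k] H),
      twistBil act actg
        ((starBil act Finv).compl₂ ((twistBil actg act ρ Finv).flip b)) R' a ξ =
        P2 (((Coalgebra.comul (R := k) (A := H)).lTensor H Finv * leg23 Finv) * leg12 R') := by
    intro R'
    induction R' using TensorProduct.induction_on with
    | zero => simp [twistBil_zero_s16, leg12]
    | tmul r r' =>
        rw [twistBil_tmul_s16, LinearMap.compl₂_apply, LinearMap.flip_apply, estar,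
          RHS2lem Finv Finv r r']
        have h12 : leg12 (k := k) (r ⊗ₜ[k] r') = r ⊗ₜ[k] (r' ⊗ₜ[k] (1 : H)) := by
          simp [leg12]
        rw [h12]
    | add R1 R2 ih1 ih2 =>
        have hleg : leg12 (k := k) (R1 + R2) = leg12 R1 + leg12 R2 := map_add _ _ _
        simp only [twistBil_add_s16, hleg, mul_add, map_add, ih1, ih2]
  rw [estar, estar, LHSlem Finv Finv, RHS1lem Finv Finv, key (RmatInv F Finv),
    ← cocycle_inv hF, sw12_X hF hcc]
end

section
/- If the k-bilinear pairing ⟨−,−⟩ on the H-module V is symmetric (⟨v, w⟩ = ⟨w, v⟩ for all v, w), then its twisted pairing is braided symmetric: ⟨v, w⟩⋆ = Σ ⟨Rₖ • w, Rᵏ • v⟩⋆ for all v, w ∈ V, where R⁻¹ = Σ Rₖ ⊗ Rᵏ is the inverse of the R-matrix. -/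
open TensorProduct

section Aux

variable {k H A C : Type*} [CommRing k] [Ring H] [Algebra k H]
    [AddCommGroup A] [Module k A] [AddCommGroup C] [Module k C]
    (act : H →ₗ[k] A →ₗ[k] A)

lemma twistBil_tmul_s17 (mu : A →ₗ[k] A →ₗ[k] C) (a b : H) (x y : A) :
    twistBil act act mu (a ⊗ₜ[k] b) x y = mu (act a x) (act b y) := rfl

lemma twistBil_T_add (mu : A →ₗ[k] A →ₗ[k] C) (T S : H ⊗[k] H) :
    twistBil act act mu (T + S) = twistBil act act mu T + twistBil act act mu S := by
  ext x y; simp [twistBil]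

lemma twistBil_mu_add (f g : A →ₗ[k] A →ₗ[k] C) (S : H ⊗[k] H) (x y : A) :
    twistBil act act (f + g) S x y = twistBil act act f S x y + twistBil act act g S x y := by
  induction S using TensorProduct.induction_on with
  | zero => simp [twistBil]
  | tmul c d => simp [twistBil_tmul_s17]
  | add S₁ S₂ h1 h2 => simp [twistBil_T_add, h1, h2]; abel

lemma twistBil_one (mu : A →ₗ[k] A →ₗ[k] C) (hact : IsHAction act) (x y : A) :
    twistBil act act mu 1 x y = mu x y := by
  rw [Algebra.TensorProduct.one_def, twistBil_tmul_s17, hact.2, hact.2]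

lemma twistBil_mul (mu : A →ₗ[k] A →ₗ[k] C) (hact : IsHAction act) (T S : H ⊗[k] H) (x y : A) :
    twistBil act act (twistBil act act mu T) S x y
      = twistBil act act mu (T * S) x y := by
  have c0 : TensorProduct.curry (0 : A ⊗[k] A →ₗ[k] C) = 0 := by ext x y; simp
  have l0 : TensorProduct.lift (0 : A →ₗ[k] A →ₗ[k] C) = 0 := by ext x y; simp
  induction T using TensorProduct.induction_on with
  | zero => simp [twistBil, c0, l0]
  | tmul a b =>
    induction S using TensorProduct.induction_on with
    | zero => simp [twistBil]
    | tmul c d =>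
      rw [twistBil_tmul_s17, twistBil_tmul_s17, Algebra.TensorProduct.tmul_mul_tmul,
        twistBil_tmul_s17, hact.1, hact.1]
    | add S₁ S₂ h1 h2 =>
      rw [twistBil_T_add]; simp only [LinearMap.add_apply]
      rw [h1, h2, mul_add, twistBil_T_add]; rfl
  | add T₁ T₂ h1 h2 =>
    rw [twistBil_T_add, twistBil_mu_add, h1, h2, add_mul, twistBil_T_add]; rfl

lemma twistBil_comm (mu : A →ₗ[k] A →ₗ[k] C) (hsym : ∀ x y : A, mu x y = mu y x)
    (T : H ⊗[k] H) (x y : A) :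
    twistBil act act mu (TensorProduct.comm k H H T) x y = twistBil act act mu T y x := by
  induction T using TensorProduct.induction_on with
  | zero => simp [twistBil]
  | tmul a b => rw [TensorProduct.comm_tmul, twistBil_tmul_s17, twistBil_tmul_s17, hsym]
  | add T₁ T₂ h1 h2 =>
    rw [map_add, twistBil_T_add, twistBil_T_add]
    simp only [LinearMap.add_apply, h1, h2]

end Aux

/-- If the `k`-bilinear pairing `⟨−,−⟩` on the `H`-module `V` is symmetric, then
its twisted pairing is braided symmetric: `⟨v, w⟩⋆ = Σ ⟨Rₖ • w, Rᵏ • v⟩⋆` with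
`R⁻¹ = Σ Rₖ ⊗ Rᵏ`. -/
theorem twisted_pairing_braided_symm {k H V : Type*} [CommRing k] [Ring H] [HopfAlgebra k H]
    [AddCommGroup V] [Module k V]
    (act : H →ₗ[k] V →ₗ[k] V) (hact : IsHAction act)
    (B : V →ₗ[k] V →ₗ[k] k) (hsym : ∀ v w : V, B v w = B w v)
    (F Finv : H ⊗[k] H) (hF : IsDrinfeldTwist F Finv) :
    ∀ v w : V, twistBil act act B Finv v w
      = twistBil act act (twistBil act act B Finv) (RmatInv F Finv) w v := by
  intro v w
  rw [twistBil_mul act _ hact, RmatInv, ← mul_assoc, hF.2.1, one_mul,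
    twistBil_comm act B hsym]
end
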